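/- arXiv:2408.12010 — 5 statements merged into one kernel-verified Lean document; each statement's English description precedes it below -/
import Mathlib

section
/- Let S be a finite type, P : S → ℝ a probability mass function with P(s) > 0 for all s, F : S → ℝ a probability mass function, ε ≥ 0 a real number, and δ ∈ [0,1). If F(s) ≥ exp(−ε) · P(s) for all s ∈ S and ∑_{s ∈ S} F(s) · (F(s)/P(s)) ≤ δ · exp(ε), then ∑_{s ∈ S, exp(−ε) ≤ F(s)/P(s) ≤ exp(ε)} F(s) ≥ 1 − δ; that is, under the distribution F, the event that the ratio F(S)/P(S) lies in [exp(−ε), exp(ε)] has probability at least 1 − δ. -/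
open Finset
open scoped Classical

/-- Lemma on posterior-to-prior ratios (finite version of Lemma
`probabilistic_representation1`): if `F(s) ≥ e^{-ε}·P(s)` pointwise and the
expected ratio `E_F[F(S)/P(S)] ≤ δ·e^ε`, then under `F` the event that the
ratio `F(S)/P(S)` lies in `[e^{-ε}, e^ε]` has probability at least `1 - δ`. -/
theorem ratio_in_band_high_probability
    {S : Type*} [Fintype S]
    (P F : S → ℝ)
    (hP_pos : ∀ s, 0 < P s) (hP_sum : ∑ s, P s = 1)
    (hF_nonneg : ∀ s, 0 ≤ F s) (hF_sum : ∑ s, F s = 1)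
    (ε δ : ℝ) (hε : 0 ≤ ε) (hδ : δ ∈ Set.Ico (0 : ℝ) 1)
    (hlow : ∀ s, F s ≥ Real.exp (-ε) * P s)
    (hexp : ∑ s, F s * (F s / P s) ≤ δ * Real.exp ε) :
    ∑ s ∈ Finset.univ.filter
        (fun s => Real.exp (-ε) ≤ F s / P s ∧ F s / P s ≤ Real.exp ε), F s
      ≥ 1 - δ := by
  have hratio_low : ∀ s, Real.exp (-ε) ≤ F s / P s := fun s =>
    (le_div_iff₀ (hP_pos s)).2 (hlow s)
  set G := Finset.univ.filter
      (fun s => Real.exp (-ε) ≤ F s / P s ∧ F s / P s ≤ Real.exp ε) with hG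
  set B := Finset.univ.filter (fun s => ¬ (F s / P s ≤ Real.exp ε)) with hB
  have hGB : G = Bᶜ := by
    ext s
    simp [hG, hB, hratio_low s]
  have hBsum : ∑ s ∈ B, F s ≤ δ := by
    have h1 : Real.exp ε * ∑ s ∈ B, F s ≤ ∑ s ∈ B, F s * (F s / P s) := by
      rw [Finset.mul_sum]
      apply Finset.sum_le_sum
      intro s hs
      have hlt : Real.exp ε < F s / P s := by
        have := (Finset.mem_filter.1 hs).2
        push_neg at this
        exact this
      rw [mul_comm]
      exact mul_le_mul_of_nonneg_left hlt.le (hF_nonneg s)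
    have h2 : ∑ s ∈ B, F s * (F s / P s) ≤ ∑ s, F s * (F s / P s) :=
      Finset.sum_le_sum_of_subset_of_nonneg (Finset.subset_univ _)
        (fun s _ _ => mul_nonneg (hF_nonneg s)
          (div_nonneg (hF_nonneg s) (hP_pos s).le))
    have h3 := h1.trans (h2.trans hexp)
    have hepos := Real.exp_pos ε
    nlinarith
  have hsplit : ∑ s ∈ B, F s + ∑ s ∈ Bᶜ, F s = 1 := by
    rw [Finset.sum_add_sum_compl]
    exact hF_sum
  rw [hGB]
  linarith
end

section
/- Let ε ≥ 0, let p ∈ (0,1), let Y be a finite type, and let ψ_0, ψ_1 : Y → ℝ be probability mass functions with ψ_0(y) > 0 and ψ_1(y) > 0 for all y. For each y define the Bayes posterior J(s_0|y) = p·ψ_0(y)/(p·ψ_0(y) + (1−p)·ψ_1(y)) and J(s_1|y) = (1−p)·ψ_1(y)/(p·ψ_0(y) + (1−p)·ψ_1(y)). Suppose that for all y, exp(−ε) ≤ J(s_0|y)/p ≤ exp(ε) and exp(−ε) ≤ J(s_1|y)/(1−p) ≤ exp(ε). Then for every subset W ⊆ Y, ∑_{y ∈ W} ψ_0(y) ≤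 (1 + (exp(ε) − 1)/min(p, 1−p)) · ∑_{y ∈ W} ψ_1(y), and symmetrically ∑_{y ∈ W} ψ_1(y) ≤ (1 + (exp(ε) − 1)/min(p, 1−p)) · ∑_{y ∈ W} ψ_0(y); that is, the mechanism is (log(1 + (exp(ε) − 1)/min(p, 1−p)), 0)-indistinguishable for the pair of secrets. -/
open Finset

/-- Two-point Bayesian model (finite version of Lemma `semantic_secure_1`):
if the Bayes posterior-to-prior ratios for both secrets lie in
`[e^{-ε}, e^ε]` for every output, then the two conditional output laws are
`(log(1 + (e^ε - 1)/min(p, 1-p)), 0)`-indistinguishable. -/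
theorem posterior_band_implies_indistinguishability
    {Y : Type*} [Fintype Y]
    (ψ0 ψ1 : Y → ℝ)
    (h0_pos : ∀ y, 0 < ψ0 y) (h1_pos : ∀ y, 0 < ψ1 y)
    (h0_sum : ∑ y, ψ0 y = 1) (h1_sum : ∑ y, ψ1 y = 1)
    (p ε : ℝ) (hp : p ∈ Set.Ioo (0 : ℝ) 1) (hε : 0 ≤ ε)
    (hJ0 : ∀ y,
      Real.exp (-ε) ≤ (p * ψ0 y / (p * ψ0 y + (1 - p) * ψ1 y)) / p ∧
      (p * ψ0 y / (p * ψ0 y + (1 - p) * ψ1 y)) / p ≤ Real.exp ε)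
    (hJ1 : ∀ y,
      Real.exp (-ε) ≤ ((1 - p) * ψ1 y / (p * ψ0 y + (1 - p) * ψ1 y)) / (1 - p) ∧
      ((1 - p) * ψ1 y / (p * ψ0 y + (1 - p) * ψ1 y)) / (1 - p) ≤ Real.exp ε) :
    ∀ W : Finset Y,
      (∑ y ∈ W, ψ0 y ≤ (1 + (Real.exp ε - 1) / min p (1 - p)) * ∑ y ∈ W, ψ1 y) ∧
      (∑ y ∈ W, ψ1 y ≤ (1 + (Real.exp ε - 1) / min p (1 - p)) * ∑ y ∈ W, ψ0 y) := by
  obtain ⟨hp0, hp1⟩ := hp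
  have hp1' : 0 < 1 - p := by linarith
  have hmin : 0 < min p (1 - p) := lt_min hp0 hp1'
  have hee : (1 : ℝ) ≤ Real.exp ε := Real.one_le_exp hε
  have hexp : 0 < Real.exp ε := Real.exp_pos ε
  have hC : 0 ≤ (Real.exp ε - 1) / min p (1 - p) :=
    div_nonneg (by linarith) hmin.le
  have hminp : min p (1 - p) ≤ p := min_le_left _ _
  have hminq : min p (1 - p) ≤ 1 - p := min_le_right _ _
  -- pointwise bounds
  have key0 : ∀ y, ψ0 y ≤ (1 + (Real.exp ε - 1) / min p (1 - p)) * ψ1 y := by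
    intro y
    set D := p * ψ0 y + (1 - p) * ψ1 y with hD
    have hDpos : 0 < D := by
      have := h0_pos y; have := h1_pos y; positivity
    have h := (hJ1 y).1
    have h' : Real.exp (-ε) * D ≤ ψ1 y := by
      rw [div_div] at h
      have : (1 - p) * ψ1 y / (D * (1 - p)) = ψ1 y / D := by
        field_simp
      rw [this] at h
      calc Real.exp (-ε) * D ≤ (ψ1 y / D) * D := by
            exact mul_le_mul_of_nonneg_right h hDpos.le
        _ = ψ1 y := by field_simp
    have hDle : D ≤ Real.exp ε * ψ1 y := by
      have := mul_le_mul_of_nonneg_left h' hexp.le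
      rw [← mul_assoc, ← Real.exp_add] at this
      simpa using this
    -- p * ψ0 y ≤ (exp ε - 1 + p) * ψ1 y
    have h2 : p * ψ0 y ≤ (Real.exp ε - 1 + p) * ψ1 y := by
      have := h1_pos y; nlinarith
    have h3 : ψ0 y ≤ (1 + (Real.exp ε - 1) / p) * ψ1 y := by
      calc ψ0 y = p * ψ0 y / p := by field_simp
        _ ≤ (Real.exp ε - 1 + p) * ψ1 y / p := by gcongr
        _ = (1 + (Real.exp ε - 1) / p) * ψ1 y := by field_simp; ring_nf
    refine h3.trans ?_
    have hdiv : (Real.exp ε - 1) / p ≤ (Real.exp ε - 1) / min p (1 - p) :=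
      div_le_div_of_nonneg_left (by linarith) hmin hminp
    have := (h1_pos y).le
    nlinarith
  have key1 : ∀ y, ψ1 y ≤ (1 + (Real.exp ε - 1) / min p (1 - p)) * ψ0 y := by
    intro y
    set D := p * ψ0 y + (1 - p) * ψ1 y with hD
    have hDpos : 0 < D := by
      have := h0_pos y; have := h1_pos y; positivity
    have h := (hJ0 y).1
    have h' : Real.exp (-ε) * D ≤ ψ0 y := by
      rw [div_div] at h
      have : p * ψ0 y / (D * p) = ψ0 y / D := by
        field_simp
      rw [this] at h
      calc Real.exp (-ε) * D ≤ (ψ0 y / D) * D := by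
            exact mul_le_mul_of_nonneg_right h hDpos.le
        _ = ψ0 y := by field_simp
    have hDle : D ≤ Real.exp ε * ψ0 y := by
      have := mul_le_mul_of_nonneg_left h' hexp.le
      rw [← mul_assoc, ← Real.exp_add] at this
      simpa using this
    have h2 : (1 - p) * ψ1 y ≤ (Real.exp ε - 1 + (1 - p)) * ψ0 y := by
      have := h0_pos y; nlinarith
    have h3 : ψ1 y ≤ (1 + (Real.exp ε - 1) / (1 - p)) * ψ0 y := by
      calc ψ1 y = (1 - p) * ψ1 y / (1 - p) := by field_simp
        _ ≤ (Real.exp ε - 1 + (1 - p)) * ψ0 y / (1 - p) := by gcongr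
        _ = (1 + (Real.exp ε - 1) / (1 - p)) * ψ0 y := by field_simp; ring
    refine h3.trans ?_
    have hdiv : (Real.exp ε - 1) / (1 - p) ≤ (Real.exp ε - 1) / min p (1 - p) :=
      div_le_div_of_nonneg_left (by linarith) hmin hminq
    have := (h0_pos y).le
    nlinarith
  intro W
  constructor
  · calc ∑ y ∈ W, ψ0 y ≤ ∑ y ∈ W, (1 + (Real.exp ε - 1) / min p (1 - p)) * ψ1 y :=
        Finset.sum_le_sum fun y _ => key0 y
      _ = (1 + (Real.exp ε - 1) / min p (1 - p)) * ∑ y ∈ W, ψ1 y := by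
        rw [Finset.mul_sum]
  · calc ∑ y ∈ W, ψ1 y ≤ ∑ y ∈ W, (1 + (Real.exp ε - 1) / min p (1 - p)) * ψ0 y :=
        Finset.sum_le_sum fun y _ => key1 y
      _ = (1 + (Real.exp ε - 1) / min p (1 - p)) * ∑ y ∈ W, ψ0 y := by
        rw [Finset.mul_sum]
end

section
/- Let (Ω, 𝔉) be a measurable space and let μ and ν be probability measures on Ω with μ absolutely continuous with respect to ν. Let ε ∈ ℝ and δ ∈ [0,1]. If μ({ω : (dμ/dν)(ω) ≤ exp(ε)}) ≥ 1 − δ, where dμ/dν denotes the Radon–Nikodym derivative of μ with respect to ν, then for every measurable set W ⊆ Ω, μ(W) ≤ exp(ε) · ν(W) + δ. -/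
open MeasureTheory

/-- A high-probability bound on the privacy loss (the Radon–Nikodym
derivative `dμ/dν` is at most `e^ε` with `μ`-probability at least `1 - δ`)
implies `(ε, δ)`-indistinguishability: `μ(W) ≤ e^ε · ν(W) + δ` for every
measurable `W`. -/
theorem plrv_bound_implies_indistinguishability
    {Ω : Type*} [MeasurableSpace Ω]
    (μ ν : Measure Ω) [IsProbabilityMeasure μ] [IsProbabilityMeasure ν]
    (hac : μ ≪ ν) (ε δ : ℝ) (hδ : δ ∈ Set.Icc (0 : ℝ) 1)
    (h : ENNReal.ofReal (1 - δ) ≤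
      μ {ω | μ.rnDeriv ν ω ≤ ENNReal.ofReal (Real.exp ε)}) :
    ∀ W : Set Ω, MeasurableSet W →
      μ W ≤ ENNReal.ofReal (Real.exp ε) * ν W + ENNReal.ofReal δ := by
  intro W hW
  set E : Set Ω := {ω | μ.rnDeriv ν ω ≤ ENNReal.ofReal (Real.exp ε)} with hE
  have hEmeas : MeasurableSet E :=
    measurableSet_le (μ.measurable_rnDeriv ν) measurable_const
  -- bound on μ (W ∩ E)
  have h1 : μ (W ∩ E) ≤ ENNReal.ofReal (Real.exp ε) * ν W := by
    have := Measure.setLIntegral_rnDeriv hac (W ∩ E)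
    calc μ (W ∩ E) = ∫⁻ ω in W ∩ E, μ.rnDeriv ν ω ∂ν := this.symm
      _ ≤ ∫⁻ _ in W ∩ E, ENNReal.ofReal (Real.exp ε) ∂ν := by
          refine setLIntegral_mono_ae (by measurability) ?_
          filter_upwards with ω hω
          exact hω.2
      _ = ENNReal.ofReal (Real.exp ε) * ν (W ∩ E) := by
          simp [Measure.restrict_apply (hW.inter hEmeas)]
      _ ≤ ENNReal.ofReal (Real.exp ε) * ν W := by
          gcongr
          exact Set.inter_subset_left
  -- bound on μ (W \ E)
  have h2 : μ (W \ E) ≤ ENNReal.ofReal δ := by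
    have hc : μ Eᶜ ≤ ENNReal.ofReal δ := by
      have hEc : μ Eᶜ = 1 - μ E := by
        rw [measure_compl hEmeas (measure_ne_top μ E), measure_univ]
      rw [hEc, tsub_le_iff_right]
      calc (1 : ENNReal) = ENNReal.ofReal δ + ENNReal.ofReal (1 - δ) := by
            rw [← ENNReal.ofReal_add hδ.1 (by linarith [hδ.2])]
            norm_num
        _ ≤ ENNReal.ofReal δ + μ E := by gcongr
    exact le_trans (measure_mono (Set.diff_subset_compl W E)) hc
  calc μ W ≤ μ (W ∩ E) + μ (W \ E) := by
        rw [← measure_inter_add_diff W hEmeas]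
    _ ≤ ENNReal.ofReal (Real.exp ε) * ν W + ENNReal.ofReal δ := add_le_add h1 h2
end

section
/- In the finite two-mechanism model with strictly positive kernels, with D_[2], D_{1,2}, P_[2], P_{1,2}, J_[2], J_{1,2} and the expected cross-entropy loss CEL defined as above, the inequality CEL(J_[2]) ≤ CEL(J_{1,2}) holds, with equality if and only if J_[2](s|y1,y2) = J_{1,2}(s|y1,y2) for all s, y1, y2. -/
open Finset

noncomputable section

/-- True joint conditional density of the two-mechanism composition. -/
def Dcomp {S X Y1 Y2 : Type*} [Fintype X]
    (γ1 : X → Y1 → ℝ) (γ2 : X → Y2 → ℝ) (p : S → X → ℝ)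
    (s : S) (y1 : Y1) (y2 : Y2) : ℝ :=
  ∑ x, γ1 x y1 * γ2 x y2 * p s x

/-- Effective marginal density of a single mechanism. -/
def psiEff {S X Y : Type*} [Fintype X]
    (γ : X → Y → ℝ) (p : S → X → ℝ) (s : S) (y : Y) : ℝ :=
  ∑ x, γ x y * p s x

/-- Product (independent-marginals) model of the composition. -/
def Dprod {S X Y1 Y2 : Type*} [Fintype X]
    (γ1 : X → Y1 → ℝ) (γ2 : X → Y2 → ℝ) (p : S → X → ℝ)
    (s : S) (y1 : Y1) (y2 : Y2) : ℝ :=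
  psiEff γ1 p s y1 * psiEff γ2 p s y2

/-- Evidence (marginal likelihood) of the true composed model. -/
def Pcomp {S X Y1 Y2 : Type*} [Fintype S] [Fintype X]
    (γ1 : X → Y1 → ℝ) (γ2 : X → Y2 → ℝ) (p : S → X → ℝ) (pS : S → ℝ)
    (y1 : Y1) (y2 : Y2) : ℝ :=
  ∑ s, Dcomp γ1 γ2 p s y1 y2 * pS s

/-- Evidence (marginal likelihood) of the product model. -/
def Pprod {S X Y1 Y2 : Type*} [Fintype S] [Fintype X]
    (γ1 : X → Y1 → ℝ) (γ2 : X → Y2 → ℝ) (p : S → X → ℝ) (pS : S → ℝ)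
    (y1 : Y1) (y2 : Y2) : ℝ :=
  ∑ s, Dprod γ1 γ2 p s y1 y2 * pS s

/-- Posterior of the true composed model. -/
def Jcomp {S X Y1 Y2 : Type*} [Fintype S] [Fintype X]
    (γ1 : X → Y1 → ℝ) (γ2 : X → Y2 → ℝ) (p : S → X → ℝ) (pS : S → ℝ)
    (s : S) (y1 : Y1) (y2 : Y2) : ℝ :=
  Dcomp γ1 γ2 p s y1 y2 * pS s / Pcomp γ1 γ2 p pS y1 y2

/-- Posterior of the product model. -/
def Jprod {S X Y1 Y2 : Type*} [Fintype S] [Fintype X]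
    (γ1 : X → Y1 → ℝ) (γ2 : X → Y2 → ℝ) (p : S → X → ℝ) (pS : S → ℝ)
    (s : S) (y1 : Y1) (y2 : Y2) : ℝ :=
  Dprod γ1 γ2 p s y1 y2 * pS s / Pprod γ1 γ2 p pS y1 y2

/-- Expected cross-entropy loss of an inference strategy `σ`. -/
def CEL {S X Y1 Y2 : Type*} [Fintype S] [Fintype X] [Fintype Y1] [Fintype Y2]
    (pS : S → ℝ) (p : S → X → ℝ) (γ1 : X → Y1 → ℝ) (γ2 : X → Y2 → ℝ)
    (σ : S → Y1 → Y2 → ℝ) : ℝ :=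
  -∑ s, ∑ x, ∑ y1, ∑ y2,
    pS s * p s x * γ1 x y1 * γ2 x y2 * Real.log (σ s y1 y2)


lemma gibbs_aux {ι : Type*} [Fintype ι] (a b : ι → ℝ)
    (ha : ∀ i, 0 < a i) (hb : ∀ i, 0 < b i) (hsum : ∑ i, a i = ∑ i, b i) :
    ∑ i, a i * Real.log (b i) ≤ ∑ i, a i * Real.log (a i) ∧
    ((∑ i, a i * Real.log (b i) = ∑ i, a i * Real.log (a i)) ↔ ∀ i, a i = b i) := by
  have hterm : ∀ i, a i * Real.log (b i) ≤ a i * Real.log (a i) + (b i - a i) := by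
    intro i
    have h := Real.log_le_sub_one_of_pos (div_pos (hb i) (ha i))
    rw [Real.log_div (hb i).ne' (ha i).ne'] at h
    have hc : a i * (b i / a i) = b i := mul_div_cancel₀ _ (ha i).ne'
    nlinarith [ha i]
  have hterm' : ∀ i, a i ≠ b i → a i * Real.log (b i) < a i * Real.log (a i) + (b i - a i) := by
    intro i hne
    have hd : b i / a i ≠ 1 := fun h => hne ((div_eq_one_iff_eq (ha i).ne').mp h).symm
    have h := Real.log_lt_sub_one_of_pos (div_pos (hb i) (ha i)) hd
    rw [Real.log_div (hb i).ne' (ha i).ne'] at h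
    have hc : a i * (b i / a i) = b i := mul_div_cancel₀ _ (ha i).ne'
    nlinarith [ha i]
  have hsum' : ∑ i, (a i * Real.log (a i) + (b i - a i)) = ∑ i, a i * Real.log (a i) := by
    rw [Finset.sum_add_distrib, Finset.sum_sub_distrib, hsum]
    ring
  constructor
  · calc ∑ i, a i * Real.log (b i) ≤ ∑ i, (a i * Real.log (a i) + (b i - a i)) :=
        Finset.sum_le_sum fun i _ => hterm i
      _ = _ := hsum'
  · constructor
    · intro heq
      by_contra hne
      push_neg at hne
      obtain ⟨i0, hi0⟩ := hne
      have hlt : ∑ i, a i * Real.log (b i) < ∑ i, (a i * Real.log (a i) + (b i - a i)) :=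
        Finset.sum_lt_sum (fun i _ => hterm i) ⟨i0, Finset.mem_univ i0, hterm' i0 hi0⟩
      rw [hsum'] at hlt
      linarith
    · intro h
      exact Finset.sum_congr rfl fun i _ => by rw [h i]

/-- Lemma `KL_divergence_and_CEL`: the expected cross-entropy loss of the
true posterior is at most that of the product-model posterior, with equality
iff the two posteriors coincide. -/
theorem cel_true_posterior_le_product_posterior
    {S X Y1 Y2 : Type*} [Fintype S] [Fintype X] [Fintype Y1] [Fintype Y2]
    (pS : S → ℝ) (p : S → X → ℝ) (γ1 : X → Y1 → ℝ) (γ2 : X → Y2 → ℝ)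
    (hpS_pos : ∀ s, 0 < pS s) (hpS_sum : ∑ s, pS s = 1)
    (hp_nonneg : ∀ s x, 0 ≤ p s x) (hp_sum : ∀ s, ∑ x, p s x = 1)
    (hγ1_pos : ∀ x y, 0 < γ1 x y) (hγ1_sum : ∀ x, ∑ y, γ1 x y = 1)
    (hγ2_pos : ∀ x y, 0 < γ2 x y) (hγ2_sum : ∀ x, ∑ y, γ2 x y = 1) :
    CEL pS p γ1 γ2 (Jcomp γ1 γ2 p pS) ≤ CEL pS p γ1 γ2 (Jprod γ1 γ2 p pS) ∧
    (CEL pS p γ1 γ2 (Jcomp γ1 γ2 p pS) = CEL pS p γ1 γ2 (Jprod γ1 γ2 p pS) ↔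
      ∀ (s : S) (y1 : Y1) (y2 : Y2),
        Jcomp γ1 γ2 p pS s y1 y2 = Jprod γ1 γ2 p pS s y1 y2) := by

  -- positivity and normalization facts
  have hpx : ∀ s, ∃ x, 0 < p s x := by
    intro s
    by_contra h
    push_neg at h
    have h0 : ∑ x, p s x = 0 :=
      Finset.sum_eq_zero fun x _ => le_antisymm (h x) (hp_nonneg s x)
    rw [hp_sum s] at h0; norm_num at h0
  have hSne : (Finset.univ : Finset S).Nonempty :=
    Finset.nonempty_of_sum_ne_zero (by rw [hpS_sum]; norm_num)
  have hDcomp_pos : ∀ s y1 y2, 0 < Dcomp γ1 γ2 p s y1 y2 := by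
    intro s y1 y2
    obtain ⟨x0, hx0⟩ := hpx s
    refine Finset.sum_pos' (fun x _ => ?_) ⟨x0, Finset.mem_univ _, ?_⟩
    · exact mul_nonneg (mul_nonneg (hγ1_pos x y1).le (hγ2_pos x y2).le) (hp_nonneg s x)
    · exact mul_pos (mul_pos (hγ1_pos x0 y1) (hγ2_pos x0 y2)) hx0
  have hpsi1_pos : ∀ s y, 0 < psiEff γ1 p s y := by
    intro s y
    obtain ⟨x0, hx0⟩ := hpx s
    exact Finset.sum_pos' (fun x _ => mul_nonneg (hγ1_pos x y).le (hp_nonneg s x))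
      ⟨x0, Finset.mem_univ _, mul_pos (hγ1_pos x0 y) hx0⟩
  have hpsi2_pos : ∀ s y, 0 < psiEff γ2 p s y := by
    intro s y
    obtain ⟨x0, hx0⟩ := hpx s
    exact Finset.sum_pos' (fun x _ => mul_nonneg (hγ2_pos x y).le (hp_nonneg s x))
      ⟨x0, Finset.mem_univ _, mul_pos (hγ2_pos x0 y) hx0⟩
  have hDprod_pos : ∀ s y1 y2, 0 < Dprod γ1 γ2 p s y1 y2 := fun s y1 y2 =>
    mul_pos (hpsi1_pos s y1) (hpsi2_pos s y2)
  have hPc_pos : ∀ y1 y2, 0 < Pcomp γ1 γ2 p pS y1 y2 := fun y1 y2 =>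
    Finset.sum_pos (fun s _ => mul_pos (hDcomp_pos s y1 y2) (hpS_pos s)) hSne
  have hPp_pos : ∀ y1 y2, 0 < Pprod γ1 γ2 p pS y1 y2 := fun y1 y2 =>
    Finset.sum_pos (fun s _ => mul_pos (hDprod_pos s y1 y2) (hpS_pos s)) hSne
  have hJc_pos : ∀ s y1 y2, 0 < Jcomp γ1 γ2 p pS s y1 y2 := fun s y1 y2 =>
    div_pos (mul_pos (hDcomp_pos s y1 y2) (hpS_pos s)) (hPc_pos y1 y2)
  have hJp_pos : ∀ s y1 y2, 0 < Jprod γ1 γ2 p pS s y1 y2 := fun s y1 y2 =>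
    div_pos (mul_pos (hDprod_pos s y1 y2) (hpS_pos s)) (hPp_pos y1 y2)
  have hJc_sum : ∀ y1 y2, ∑ s, Jcomp γ1 γ2 p pS s y1 y2 = 1 := by
    intro y1 y2
    unfold Jcomp
    rw [← Finset.sum_div, div_eq_one_iff_eq (hPc_pos y1 y2).ne']
    rfl
  have hJp_sum : ∀ y1 y2, ∑ s, Jprod γ1 γ2 p pS s y1 y2 = 1 := by
    intro y1 y2
    unfold Jprod
    rw [← Finset.sum_div, div_eq_one_iff_eq (hPp_pos y1 y2).ne']
    rfl
  have hDJ : ∀ s y1 y2, Dcomp γ1 γ2 p s y1 y2 * pS s =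
      Pcomp γ1 γ2 p pS y1 y2 * Jcomp γ1 γ2 p pS s y1 y2 := by
    intro s y1 y2
    unfold Jcomp
    have hne := (hPc_pos y1 y2).ne'
    field_simp
  -- rearranged form of CEL
  have hCEL : ∀ σ : S → Y1 → Y2 → ℝ, CEL pS p γ1 γ2 σ =
      -∑ y1, ∑ y2, Pcomp γ1 γ2 p pS y1 y2 *
        ∑ s, Jcomp γ1 γ2 p pS s y1 y2 * Real.log (σ s y1 y2) := by
    intro σ
    unfold CEL
    congr 1
    have step1 : ∀ s : S, ∑ x, ∑ y1, ∑ y2,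
        pS s * p s x * γ1 x y1 * γ2 x y2 * Real.log (σ s y1 y2)
        = ∑ y1, ∑ y2, Dcomp γ1 γ2 p s y1 y2 * pS s * Real.log (σ s y1 y2) := by
      intro s
      rw [Finset.sum_comm]
      refine Finset.sum_congr rfl fun y1 _ => ?_
      rw [Finset.sum_comm]
      refine Finset.sum_congr rfl fun y2 _ => ?_
      unfold Dcomp
      rw [Finset.sum_mul, Finset.sum_mul]
      exact Finset.sum_congr rfl fun x _ => by ring
    calc ∑ s, ∑ x, ∑ y1, ∑ y2,
          pS s * p s x * γ1 x y1 * γ2 x y2 * Real.log (σ s y1 y2)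
        = ∑ s, ∑ y1, ∑ y2, Dcomp γ1 γ2 p s y1 y2 * pS s * Real.log (σ s y1 y2) :=
          Finset.sum_congr rfl fun s _ => step1 s
      _ = ∑ y1, ∑ s, ∑ y2, Dcomp γ1 γ2 p s y1 y2 * pS s * Real.log (σ s y1 y2) :=
          Finset.sum_comm
      _ = ∑ y1, ∑ y2, ∑ s, Dcomp γ1 γ2 p s y1 y2 * pS s * Real.log (σ s y1 y2) :=
          Finset.sum_congr rfl fun y1 _ => Finset.sum_comm
      _ = ∑ y1, ∑ y2, Pcomp γ1 γ2 p pS y1 y2 *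
            ∑ s, Jcomp γ1 γ2 p pS s y1 y2 * Real.log (σ s y1 y2) := by
          refine Finset.sum_congr rfl fun y1 _ => Finset.sum_congr rfl fun y2 _ => ?_
          rw [Finset.mul_sum]
          exact Finset.sum_congr rfl fun s _ => by rw [hDJ]; ring
  -- Gibbs inequality for each (y1, y2)
  have hG : ∀ y1 y2,
      (∑ s, Jcomp γ1 γ2 p pS s y1 y2 * Real.log (Jprod γ1 γ2 p pS s y1 y2)) ≤
        (∑ s, Jcomp γ1 γ2 p pS s y1 y2 * Real.log (Jcomp γ1 γ2 p pS s y1 y2)) ∧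
      ((∑ s, Jcomp γ1 γ2 p pS s y1 y2 * Real.log (Jprod γ1 γ2 p pS s y1 y2)) =
        (∑ s, Jcomp γ1 γ2 p pS s y1 y2 * Real.log (Jcomp γ1 γ2 p pS s y1 y2)) ↔
        ∀ s, Jcomp γ1 γ2 p pS s y1 y2 = Jprod γ1 γ2 p pS s y1 y2) := fun y1 y2 =>
    gibbs_aux (fun s => Jcomp γ1 γ2 p pS s y1 y2) (fun s => Jprod γ1 γ2 p pS s y1 y2)
      (fun s => hJc_pos s y1 y2) (fun s => hJp_pos s y1 y2)
      (by rw [hJc_sum, hJp_sum])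
  set F : Y1 → Y2 → ℝ := fun y1 y2 => Pcomp γ1 γ2 p pS y1 y2 *
    ∑ s, Jcomp γ1 γ2 p pS s y1 y2 * Real.log (Jcomp γ1 γ2 p pS s y1 y2) with hF
  set G : Y1 → Y2 → ℝ := fun y1 y2 => Pcomp γ1 γ2 p pS y1 y2 *
    ∑ s, Jcomp γ1 γ2 p pS s y1 y2 * Real.log (Jprod γ1 γ2 p pS s y1 y2) with hGdef
  have hCELc : CEL pS p γ1 γ2 (Jcomp γ1 γ2 p pS) = -∑ y1, ∑ y2, F y1 y2 :=
    hCEL _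
  have hCELp : CEL pS p γ1 γ2 (Jprod γ1 γ2 p pS) = -∑ y1, ∑ y2, G y1 y2 :=
    hCEL _
  have hGF : ∀ y1 y2, G y1 y2 ≤ F y1 y2 := fun y1 y2 =>
    mul_le_mul_of_nonneg_left (hG y1 y2).1 (hPc_pos y1 y2).le
  have hGFsum : ∀ y1, ∑ y2, G y1 y2 ≤ ∑ y2, F y1 y2 := fun y1 =>
    Finset.sum_le_sum fun y2 _ => hGF y1 y2
  constructor
  · rw [hCELc, hCELp]
    exact neg_le_neg (Finset.sum_le_sum fun y1 _ => hGFsum y1)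
  · rw [hCELc, hCELp]
    rw [neg_eq_iff_eq_neg, neg_neg, eq_comm]
    rw [Finset.sum_eq_sum_iff_of_le fun y1 _ => hGFsum y1]
    constructor
    · intro h s y1 y2
      have h2 := (Finset.sum_eq_sum_iff_of_le fun y2 _ => hGF y1 y2).mp
        (h y1 (Finset.mem_univ y1))
      have h3 : G y1 y2 = F y1 y2 := h2 y2 (Finset.mem_univ y2)
      rw [hF, hGdef] at h3
      simp only at h3
      have h4 := mul_left_cancel₀ (hPc_pos y1 y2).ne' h3
      exact ((hG y1 y2).2.mp h4) s
    · intro h y1 _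
      refine Finset.sum_congr rfl fun y2 _ => ?_
      rw [hF, hGdef]
      simp only
      congr 1
      exact (hG y1 y2).2.mpr (fun s => h s y1 y2)

end
end

section
/- Probability integral transform: let μ be a Borel probability measure on ℝ and let F : ℝ → ℝ, F(x) = μ((−∞, x]), be its cumulative distribution function. If F is continuous, then the pushforward measure of μ under F is the uniform probability distribution on [0,1] (Lebesgue measure restricted to the interval [0,1]). -/
open MeasureTheory

/-- Probability integral transform: if the cumulative distribution function
`F` of a Borel probability measure `μ` on `ℝ` is continuous, then the
pushforward of `μ` under `F` is the uniform distribution on `[0,1]`. -/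
theorem probability_integral_transform
    (μ : Measure ℝ) [IsProbabilityMeasure μ]
    (F : ℝ → ℝ) (hF : ∀ x, F x = (μ (Set.Iic x)).toReal)
    (hcont : Continuous F) :
    Measure.map F μ = volume.restrict (Set.Icc (0 : ℝ) 1) := by
  have hmono : Monotone F := by
    intro a b hab
    rw [hF a, hF b]
    exact ENNReal.toReal_mono (measure_ne_top μ _)
      (measure_mono (Set.Iic_subset_Iic.2 hab))
  have hFmeas : Measurable F := hmono.measurable
  have hF0 : ∀ x, 0 ≤ F x := fun x => by rw [hF x]; exact ENNReal.toReal_nonneg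
  have hF1 : ∀ x, F x ≤ 1 := fun x => by
    rw [hF x]
    have h := prob_le_one (μ := μ) (s := Set.Iic x)
    simpa using ENNReal.toReal_mono (by simp) h
  -- limits of F
  have htop : Filter.Tendsto F Filter.atTop (nhds 1) := by
    have h1 := tendsto_measure_Iic_atTop μ
    have h2 := (ENNReal.tendsto_toReal (measure_ne_top μ Set.univ)).comp h1
    have : (fun x => (μ (Set.Iic x)).toReal) = F := by
      funext x; rw [hF x]
    have h2' : Filter.Tendsto (fun x => (μ (Set.Iic x)).toReal) Filter.atTop
        (nhds (μ Set.univ).toReal) := h2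
    rw [this] at h2'
    simpa using h2'
  -- existence of points with small F values
  have hsmall : ∀ y : ℝ, 0 < y → ∃ x, F x < y := by
    intro y hy
    by_contra h
    push_neg at h
    have hanti : Antitone fun n : ℕ => Set.Iic (-(n : ℝ)) := by
      intro m n hmn
      exact Set.Iic_subset_Iic.2 (by exact_mod_cast neg_le_neg (by exact_mod_cast hmn))
    have hinter : ⋂ n : ℕ, Set.Iic (-(n : ℝ)) = (∅ : Set ℝ) := by
      ext x
      simp only [Set.mem_iInter, Set.mem_Iic, Set.mem_empty_iff_false, iff_false, not_forall,
        not_le]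
      obtain ⟨n, hn⟩ := exists_nat_gt (-x)
      exact ⟨n, by linarith⟩
    have hlim : Filter.Tendsto (fun n : ℕ => μ (Set.Iic (-(n : ℝ)))) Filter.atTop (nhds 0) := by
      have := tendsto_measure_iInter_atTop (μ := μ)
        (fun n => measurableSet_Iic.nullMeasurableSet) hanti
        ⟨0, measure_ne_top μ _⟩
      rw [hinter] at this
      simpa [Function.comp_def] using this
    have hev : ∀ᶠ n : ℕ in Filter.atTop, μ (Set.Iic (-(n : ℝ))) < ENNReal.ofReal y :=
      hlim.eventually_lt_const (by simpa using hy)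
    obtain ⟨n, hn⟩ := hev.exists
    have : F (-(n : ℝ)) < y := by
      rw [hF]
      calc (μ (Set.Iic (-(n : ℝ)))).toReal
          < (ENNReal.ofReal y).toReal :=
            ENNReal.toReal_strict_mono (by simp) hn
        _ = y := ENNReal.toReal_ofReal hy.le
    exact absurd this (not_lt.2 (h _))
  -- key computation
  have key : ∀ y : ℝ, μ (F ⁻¹' Set.Iic y) = volume (Set.Iic y ∩ Set.Icc (0 : ℝ) 1) := by
    intro y
    rcases lt_or_ge y 0 with hy | hy
    · have h1 : F ⁻¹' Set.Iic y = ∅ := by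
        ext x
        simp only [Set.mem_preimage, Set.mem_Iic, Set.mem_empty_iff_false, iff_false, not_le]
        exact lt_of_lt_of_le hy (hF0 x)
      have h2 : Set.Iic y ∩ Set.Icc (0 : ℝ) 1 = ∅ := by
        ext x
        simp only [Set.mem_inter_iff, Set.mem_Iic, Set.mem_Icc, Set.mem_empty_iff_false,
          iff_false, not_and]
        intro hxy hx0 hx1
        linarith
      rw [h1, h2]
      simp
    rcases le_or_gt 1 y with hy1 | hy1
    · have h1 : F ⁻¹' Set.Iic y = Set.univ := by
        ext x
        simp only [Set.mem_preimage, Set.mem_Iic, Set.mem_univ, iff_true]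
        exact le_trans (hF1 x) hy1
      have h2 : Set.Iic y ∩ Set.Icc (0 : ℝ) 1 = Set.Icc (0 : ℝ) 1 := by
        rw [Set.inter_eq_self_of_subset_right]
        rintro x ⟨_, hx1⟩
        exact le_trans hx1 hy1
      rw [h1, h2, measure_univ, Real.volume_Icc]
      norm_num
    · -- 0 ≤ y < 1
      have h2 : Set.Iic y ∩ Set.Icc (0 : ℝ) 1 = Set.Icc 0 y := by
        ext x
        simp only [Set.mem_inter_iff, Set.mem_Iic, Set.mem_Icc]
        constructor
        · rintro ⟨hxy, hx0, _⟩; exact ⟨hx0, hxy⟩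
        · rintro ⟨hx0, hxy⟩; exact ⟨hxy, hx0, le_trans hxy hy1.le⟩
      rw [h2, Real.volume_Icc]
      set S := F ⁻¹' Set.Iic y with hS
      have hSclosed : IsClosed S := isClosed_Iic.preimage hcont
      have hSbdd : BddAbove S := by
        obtain ⟨b, hb⟩ := (htop.eventually (eventually_gt_nhds hy1)).exists
        refine ⟨b, fun x hx => ?_⟩
        by_contra hbx
        push_neg at hbx
        exact absurd (le_trans (hmono hbx.le) hx) (not_le.2 hb)
      rcases Set.eq_empty_or_nonempty S with hSe | hSne
      · have hy0 : y = 0 := by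
          by_contra h0
          have : 0 < y := lt_of_le_of_ne hy (Ne.symm h0)
          obtain ⟨x, hx⟩ := hsmall y this
          exact absurd (Set.eq_empty_iff_forall_notMem.1 hSe x) (by simp [hS, hx.le])
        rw [hSe, hy0]
        simp
      · set s := sSup S with hs
        have hsmem : s ∈ S := hSclosed.csSup_mem hSne hSbdd
        have hSIic : S = Set.Iic s := by
          apply Set.eq_of_subset_of_subset
          · exact fun x hx => le_csSup hSbdd hx
          · intro x hx
            exact le_trans (hmono hx) hsmem
        have hFs : F s = y := by
          refine le_antisymm hsmem ?_
          by_contra hlt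
          push_neg at hlt
          have hev : ∀ᶠ t in nhds s, F t < y :=
            hcont.continuousAt.eventually_lt continuousAt_const hlt
          have hev' : ∀ᶠ t in nhdsWithin s (Set.Ioi s), F t < y :=
            nhdsWithin_le_nhds hev
          obtain ⟨t, htlt, hts⟩ := (hev'.and self_mem_nhdsWithin).exists
          have : t ∈ S := htlt.le
          have := le_csSup hSbdd this
          exact absurd hts (by simp [hs, not_lt.2 this])
        have hμ : μ (Set.Iic s) = ENNReal.ofReal y := by
          have := hF s
          rw [hFs] at this
          rw [← ENNReal.ofReal_toReal (measure_ne_top μ (Set.Iic s)), ← this]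
        rw [hSIic, hμ]
        norm_num
  -- conclude by extensionality on Iic
  haveI : IsProbabilityMeasure (Measure.map F μ) :=
    Measure.isProbabilityMeasure_map hFmeas.aemeasurable
  refine Measure.ext_of_Iic (Measure.map F μ) (volume.restrict (Set.Icc (0 : ℝ) 1)) fun y => ?_
  rw [Measure.map_apply hFmeas measurableSet_Iic,
    Measure.restrict_apply measurableSet_Iic]
  exact key y
end
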